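/- For any two paths P, Q ∈ 𝒫, the path operators commute: d_P ∘ d_Q = d_Q ∘ d_P as operators Λ → Λ. -/

import Mathlib

open scoped Classical

noncomputable section

/-- The base field `K = ℚ(q)` of rational functions in `q` over `ℚ`. -/
abbrev K : Type := RatFunc ℚ

/-- The variable `q`. -/
def q : K := RatFunc.X

/-- The ring of symmetric functions `Λ`, realized as the polynomial ring over `K`
on the power sum generators `p r`, `r ≥ 1`. -/
abbrev SF : Type := MvPolynomial ℕ+ K

/-- The power sum generator `p r`. -/
def p (r : ℕ+) : SF := MvPolynomial.X r

/-- The elementary symmetric functions, determined by the generating function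
`∑ e_m z^m = exp (∑_{r ≥ 1} (-1)^(r-1) p_r z^r / r)`, equivalently (char. 0) by `e_0 = 1` and
Newton's recursion `(m+1) e_{m+1} = ∑_{j=0}^{m} (-1)^j p_{j+1} e_{m-j}`. -/
def e : ℕ → SF
  | 0 => 1
  | (m+1) =>
      (((m : K) + 1)⁻¹) •
        ∑ r ∈ Finset.range (m+1), ((-1 : SF))^r * p ⟨r+1, Nat.succ_pos r⟩ * e (m - r)
  termination_by m => m
  decreasing_by exact Nat.lt_succ_of_le (Nat.sub_le _ _)

/-- `V k = Λ[y_1, …, y_k]`. -/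
abbrev V (k : ℕ) : Type := MvPolynomial (Fin k) SF

/-- `q` as an element of `V k`. -/
def qV (k : ℕ) : V k := algebraMap K (V k) q

/-- The variable `y i` of `V k` (1-based: meaningful for `1 ≤ i ≤ k`). -/
def Y (k i : ℕ) : V k := if h : i - 1 < k then MvPolynomial.X ⟨i - 1, h⟩ else 0

/-- The operator exchanging the variables `y i` and `y (i+1)` (meaningful for `1 ≤ i ≤ k-1`). -/
def swapVar (k i : ℕ) : V k → V k := fun P =>
  if h : i - 1 < k ∧ i < k then
    MvPolynomial.rename (Equiv.swap (⟨i - 1, h.1⟩ : Fin k) (⟨i, h.2⟩ : Fin k)) P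
  else P

/-- `Trel T` says that, for each `k` and each `1 ≤ i ≤ k-1`, the operator `T k i : V k → V k`
is the Dyck path algebra operator `T_i`, characterized by
`(y_{i+1} - y_i) * T_i P = (q-1) y_{i+1} P + (y_{i+1} - q y_i) * (s_i P)`
(this determines `T k i` uniquely since `V k` is an integral domain). -/
def Trel (T : ∀ k : ℕ, ℕ → V k → V k) : Prop :=
  ∀ k i, 1 ≤ i → i + 1 ≤ k → ∀ P : V k,
    (Y k (i+1) - Y k i) * T k i P
      = (qV k - 1) * Y k (i+1) * P + (Y k (i+1) - qV k * Y k i) * swapVar k i P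

/-- `Tchain T m n = T_1 ∘ T_2 ∘ ⋯ ∘ T_n` on `V m` (the rightmost factor applied first). -/
def Tchain (T : ∀ k : ℕ, ℕ → V k → V k) (m : ℕ) : ℕ → V m → V m
  | 0 => fun F => F
  | (n+1) => fun F => Tchain T m n (T m (n+1) F)

/-- The coefficient map `Λ → V (k+1)` of the plethystic substitution `p_r ↦ p_r + (q-1) y_{k+1}^r`. -/
def plethAddC (k : ℕ) : SF →+* V (k+1) :=
  MvPolynomial.eval₂Hom (algebraMap K (V (k+1)))
    (fun r => MvPolynomial.C (p r) + (qV (k+1) - 1) * (Y (k+1) (k+1))^(r : ℕ))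

/-- The plethystic substitution `V k → V (k+1)`, `F ↦ F[X + (q-1) y_{k+1}]`,
fixing the variables `y_1, …, y_k` and sending `p_r ↦ p_r + (q-1) y_{k+1}^r`. -/
def raiseAdd (k : ℕ) : V k →+* V (k+1) :=
  MvPolynomial.eval₂Hom (plethAddC k) (fun j => MvPolynomial.X (Fin.castSucc j))

/-- The operator `d_+ : V k → V (k+1)`, `d_+ F = T_1 T_2 ⋯ T_k (F[X + (q-1) y_{k+1}])`. -/
def dPlus (T : ∀ k : ℕ, ℕ → V k → V k) (k : ℕ) (F : V k) : V (k+1) :=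
  Tchain T (k+1) k (raiseAdd k F)

/-- The coefficient map `Λ → V (k+1)` of the plethystic substitution `p_r ↦ p_r - (q-1) y_{k+1}^r`. -/
def plethSubC (k : ℕ) : SF →+* V (k+1) :=
  MvPolynomial.eval₂Hom (algebraMap K (V (k+1)))
    (fun r => MvPolynomial.C (p r) - (qV (k+1) - 1) * (Y (k+1) (k+1))^(r : ℕ))

/-- The plethystic substitution `V (k+1) → V (k+1)`, `F ↦ F[X - (q-1) y_{k+1}]`. -/
def plethSub (k : ℕ) : V (k+1) →+* V (k+1) :=
  MvPolynomial.eval₂Hom (plethSubC k) (fun j => MvPolynomial.X j)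

/-- Expansion of an element of `V (k+1)` as a polynomial in the last variable `y_{k+1}`
with coefficients in `V k`. -/
def toPolyLast (k : ℕ) : V (k+1) ≃ₐ[SF] Polynomial (V k) :=
  (MvPolynomial.renameEquiv SF finSuccEquivLast).trans (MvPolynomial.optionEquivLeft SF (Fin k))

/-- The operator `d_- : V (k+1) → V k`:  writing `F[X - (q-1) y_{k+1}] = ∑_j F_j y_{k+1}^j`
with `F_j ∈ V k`, set `d_- F = ∑_j (-1)^j F_j e_{j+1}`. -/
def dMinus (k : ℕ) (F : V (k+1)) : V k :=
  ((toPolyLast k) (plethSub k F)).sum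
    (fun j Fj => ((-1 : V k))^j * (MvPolynomial.C (e (j+1)) * Fj))

/-- `d_- : V k → V (k-1)` for every `k` (junk value `0` for `k = 0`). -/
def dMinus' : ∀ k : ℕ, V k → V (k - 1)
  | 0 => fun _ => 0
  | (k+1) => dMinus k

/-- The operator `φ = (d_- d_+ - d_+ d_-)/(q-1) : V (k+1) → V (k+1)`. -/
def phi (T : ∀ k : ℕ, ℕ → V k → V k) (k : ℕ) (F : V (k+1)) : V (k+1) :=
  ((q - 1)⁻¹ : K) • (dMinus (k+1) (dPlus T (k+1) F) - dPlus T k (dMinus k F))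

/-- `φ : V k → V k` for every `k` (junk value, the identity, for `k = 0`). -/
def phi' (T : ∀ k : ℕ, ℕ → V k → V k) : ∀ k : ℕ, V k → V k
  | 0 => fun F => F
  | (k+1) => phi T k


/-- The composite operator `Op T a s = d_- φ^{a 1} d_- φ^{a 2} ⋯ d_- φ^{a s} : V s → V 0`
(the rightmost factor applied first, each factor acting in the appropriate degree). -/
def Op (T : ∀ k : ℕ, ℕ → V k → V k) (a : ℕ → ℕ) : ∀ s : ℕ, V s → V 0
  | 0 => fun F => F
  | (s+1) => fun F => Op T a s (dMinus s ((phi T s)^[a (s+1)] F))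

/-- Steps of a Schröder path: north `(0,1)`, diagonal `(1,1)`, east `(1,0)`. -/
inductive PStep : Type
  | north : PStep
  | diag : PStep
  | east : PStep
  deriving DecidableEq

/-- A word in `{-, 0, +}` (read left to right) encodes a path in `𝒫` iff it ends on the
diagonal, stays weakly above it, and no diagonal step lies on the line `y = x`. -/
def IsPath (w : List PStep) : Prop :=
  (w.count PStep.east = w.count PStep.north) ∧
  (∀ n, (w.take n).count PStep.east ≤ (w.take n).count PStep.north) ∧
  (∀ n < w.length, w.getD n PStep.east = PStep.diag →
      (w.take n).count PStep.east < (w.take n).count PStep.north)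

/-- Applying the operator of a single step to an element of some `V k`. -/
def stepApply (T : ∀ k : ℕ, ℕ → V k → V k) : PStep → (Σ k : ℕ, V k) → (Σ k : ℕ, V k)
  | PStep.east, ⟨k, F⟩ => ⟨k+1, dPlus T k F⟩
  | PStep.north, ⟨k, F⟩ => ⟨k-1, dMinus' k F⟩
  | PStep.diag, ⟨k, F⟩ => ⟨k, phi' T k F⟩

/-- Running the word `w` (left to right composition, the operator of the last letter of `w`
applied first) on `F ∈ V 0`. -/
def pathRun (T : ∀ k : ℕ, ℕ → V k → V k) (w : List PStep) (F : V 0) : Σ k : ℕ, V k :=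
  w.foldr (stepApply T) ⟨0, F⟩

/-- The path operator `d_P : Λ → Λ` of the word `w`: each `-` becomes `d_-`, each `0`
becomes `φ`, each `+` becomes `d_+`.  (For a genuine path the run ends in degree `0`.) -/
def dPath (T : ∀ k : ℕ, ℕ → V k → V k) (w : List PStep) (F : V 0) : V 0 :=
  if h : (pathRun T w F).1 = 0 then cast (congrArg V h) (pathRun T w F).2 else 0


set_option maxHeartbeats 1000000
set_option synthInstance.maxHeartbeats 400000

/-! ### Auxiliary development: every path operator is multiplication by a symmetric function -/

/-- Coefficient map of the plethysm `p_r ↦ p_r + (q-1)(y_1^r + ⋯ + y_k^r)`. -/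
def PhiC (k : ℕ) : SF →+* V k :=
  MvPolynomial.eval₂Hom (algebraMap K (V k))
    (fun r => MvPolynomial.C (p r) + (qV k - 1) * ∑ i : Fin k, (MvPolynomial.X i)^(r : ℕ))

/-- The plethysm `Φ_k : Λ → V k`, `F ↦ F[X + (q-1)(y_1 + ⋯ + y_k)]`. -/
def Phi (k : ℕ) : V 0 →+* V k :=
  MvPolynomial.eval₂Hom (PhiC k) Fin.elim0

lemma PhiC_C (k : ℕ) (a : K) :
    PhiC k (MvPolynomial.C a) = MvPolynomial.C (MvPolynomial.C a) := by
  simp [PhiC, MvPolynomial.algebraMap_apply, MvPolynomial.algebraMap_eq]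

lemma PhiC_X (k : ℕ) (r : ℕ+) :
    PhiC k (p r) = MvPolynomial.C (p r)
      + (qV k - 1) * ∑ i : Fin k, (MvPolynomial.X i)^(r : ℕ) := by
  simp [PhiC, p]

lemma Phi_C (k : ℕ) (s : SF) : Phi k (MvPolynomial.C s) = PhiC k s := by
  simp [Phi]

lemma Phi_zero_eq (F : V 0) : Phi 0 F = F := by
  obtain ⟨s, rfl⟩ := MvPolynomial.C_surjective (Fin 0) F
  rw [Phi_C]
  induction s using MvPolynomial.induction_on with
  | C a => rw [PhiC_C]
  | add f g hf hg => simp only [map_add, hf, hg]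
  | mul_X f r hf =>
      rw [map_mul, map_mul, hf]
      congr 1
      rw [← p, PhiC_X]
      simp

lemma qV_eq (k : ℕ) : qV k = MvPolynomial.C (MvPolynomial.C q) := rfl

lemma Y_last (k : ℕ) : Y (k+1) (k+1) = MvPolynomial.X (Fin.last k) := by
  rw [Y, dif_pos (show k+1-1 < k+1 from Nat.lt_succ_self k)]
  rfl

/-- `raiseAdd` intertwines `Φ_k` and `Φ_{k+1}`. -/
lemma raiseAdd_PhiC_X (k : ℕ) (r : ℕ+) :
    raiseAdd k (PhiC k (p r)) = PhiC (k+1) (p r) := by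
  have h1 : raiseAdd k (MvPolynomial.C (p r)) = plethAddC k (p r) := by
    simp [raiseAdd]
  have h2 : plethAddC k (p r)
      = MvPolynomial.C (p r) + (qV (k+1) - 1) * (Y (k+1) (k+1))^(r : ℕ) := by
    simp [plethAddC, p]
  have h3 : raiseAdd k (qV k) = qV (k+1) := by
    rw [qV_eq, qV_eq]
    show raiseAdd k (MvPolynomial.C (MvPolynomial.C q)) = _
    simp [raiseAdd, plethAddC, MvPolynomial.algebraMap_apply, MvPolynomial.algebraMap_eq]
  have h4 : ∀ i : Fin k, raiseAdd k ((MvPolynomial.X i : V k)^(r : ℕ))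
      = (MvPolynomial.X (Fin.castSucc i) : V (k+1))^(r : ℕ) := by
    intro i; rw [map_pow]; simp [raiseAdd]
  rw [PhiC_X, PhiC_X, map_add, map_mul, map_sub, map_one, h1, h2, h3, map_sum]
  simp only [h4]
  rw [Fin.sum_univ_castSucc, Y_last]
  ring

lemma raiseAdd_PhiC (k : ℕ) (s : SF) : raiseAdd k (PhiC k s) = PhiC (k+1) s := by
  induction s using MvPolynomial.induction_on with
  | C a =>
      rw [PhiC_C, PhiC_C]
      simp [raiseAdd, plethAddC, MvPolynomial.algebraMap_apply, MvPolynomial.algebraMap_eq]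
  | add f g hf hg => simp only [map_add, hf, hg]
  | mul_X f r hf =>
      rw [map_mul, map_mul, hf, ← p, raiseAdd_PhiC_X, p, ← map_mul]

lemma raiseAdd_Phi (k : ℕ) (F : V 0) : raiseAdd k (Phi k F) = Phi (k+1) F := by
  obtain ⟨s, rfl⟩ := MvPolynomial.C_surjective (Fin 0) F
  rw [Phi_C, Phi_C, raiseAdd_PhiC]

/-- `plethSub` sends `Φ_{k+1} F` to the image of `Φ_k F` under renaming. -/
lemma plethSub_PhiC_X (k : ℕ) (r : ℕ+) :
    plethSub k (PhiC (k+1) (p r)) = MvPolynomial.rename Fin.castSucc (PhiC k (p r)) := by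
  have h1 : plethSub k (MvPolynomial.C (p r))
      = MvPolynomial.C (p r) - (qV (k+1) - 1) * (Y (k+1) (k+1))^(r : ℕ) := by
    simp [plethSub, plethSubC, p]
  have h3 : plethSub k (qV (k+1)) = qV (k+1) := by
    rw [qV_eq]
    show plethSub k (MvPolynomial.C (MvPolynomial.C q)) = _
    simp [plethSub, plethSubC, MvPolynomial.algebraMap_apply, MvPolynomial.algebraMap_eq]
  have h4 : ∀ i : Fin (k+1), plethSub k ((MvPolynomial.X i : V (k+1))^(r : ℕ))
      = (MvPolynomial.X i : V (k+1))^(r : ℕ) := by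
    intro i; rw [map_pow]; simp [plethSub]
  have h5 : MvPolynomial.rename (Fin.castSucc (n := k)) (qV k) = qV (k+1) := by
    rw [qV_eq, qV_eq, MvPolynomial.rename_C]
  have h6 : ∀ i : Fin k,
      MvPolynomial.rename Fin.castSucc ((MvPolynomial.X i : V k)^(r : ℕ))
        = (MvPolynomial.X (Fin.castSucc i) : V (k+1))^(r : ℕ) := by
    intro i; rw [map_pow, MvPolynomial.rename_X]
  rw [PhiC_X, PhiC_X, map_add, map_mul, map_sub, map_one, h1, h3, map_sum]
  simp only [h4]
  rw [map_add, map_mul, map_sub, map_one, map_sum, MvPolynomial.rename_C, h5]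
  simp only [h6]
  rw [Fin.sum_univ_castSucc, Y_last]
  ring

lemma plethSub_PhiC (k : ℕ) (s : SF) :
    plethSub k (PhiC (k+1) s) = MvPolynomial.rename Fin.castSucc (PhiC k s) := by
  induction s using MvPolynomial.induction_on with
  | C a =>
      rw [PhiC_C, PhiC_C, MvPolynomial.rename_C]
      simp [plethSub, plethSubC, MvPolynomial.algebraMap_apply, MvPolynomial.algebraMap_eq]
  | add f g hf hg => simp only [map_add, hf, hg]
  | mul_X f r hf =>
      simp only [map_mul]
      rw [hf]
      refine congrArg (fun x => MvPolynomial.rename Fin.castSucc (PhiC k f) * x) ?_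
      rw [← p, plethSub_PhiC_X]

lemma plethSub_Phi (k : ℕ) (F : V 0) :
    plethSub k (Phi (k+1) F) = MvPolynomial.rename Fin.castSucc (Phi k F) := by
  obtain ⟨s, rfl⟩ := MvPolynomial.C_surjective (Fin 0) F
  rw [Phi_C, Phi_C, plethSub_PhiC]

lemma toPolyLast_rename (k : ℕ) (G : V k) :
    toPolyLast k (MvPolynomial.rename Fin.castSucc G) = Polynomial.C G := by
  induction G using MvPolynomial.induction_on with
  | C s =>
      rw [MvPolynomial.rename_C]
      have : (MvPolynomial.C s : V (k+1)) = algebraMap SF (V (k+1)) s := rfl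
      rw [this, AlgEquiv.commutes]
      rfl
  | add f g hf hg =>
      rw [map_add, map_add, hf, hg, Polynomial.C_add]
  | mul_X f i hf =>
      rw [map_mul, map_mul, hf, MvPolynomial.rename_X, map_mul]
      congr 1
      show (MvPolynomial.optionEquivLeft SF (Fin k))
        ((MvPolynomial.renameEquiv SF finSuccEquivLast) (MvPolynomial.X (Fin.castSucc i)))
          = Polynomial.C (MvPolynomial.X i)
      rw [MvPolynomial.renameEquiv_apply, MvPolynomial.rename_X, finSuccEquivLast_castSucc,
        MvPolynomial.optionEquivLeft_X_some]

/-- The `Polynomial.sum` appearing in `dMinus` is semilinear over constants. -/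
lemma dMinus_sum_mul (k : ℕ) (P : Polynomial (V k)) (G : V k) :
    (P * Polynomial.C G).sum
        (fun j Fj => ((-1 : V k))^j * (MvPolynomial.C (e (j+1)) * Fj))
      = P.sum (fun j Fj => ((-1 : V k))^j * (MvPolynomial.C (e (j+1)) * Fj)) * G := by
  induction P using Polynomial.induction_on' with
  | add f g hf hg =>
      rw [add_mul, Polynomial.sum_add_index, Polynomial.sum_add_index, hf, hg, add_mul]
      all_goals intros <;> ring_nf <;> simp [mul_add]
  | monomial n a =>
      rw [Polynomial.monomial_mul_C, Polynomial.sum_monomial_index,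
        Polynomial.sum_monomial_index]
      · ring
      · simp
      · simp

lemma dMinus_mul_Phi (k : ℕ) (A : V (k+1)) (F : V 0) :
    dMinus k (A * Phi (k+1) F) = dMinus k A * Phi k F := by
  unfold dMinus
  rw [map_mul, plethSub_Phi, map_mul, toPolyLast_rename, dMinus_sum_mul]

/-- Invariance of `Φ_k F` under variable permutations. -/
lemma rename_PhiC_X (k : ℕ) (σ : Equiv.Perm (Fin k)) (r : ℕ+) :
    MvPolynomial.rename (σ : Fin k → Fin k) (PhiC k (p r)) = PhiC k (p r) := by
  have h5 : MvPolynomial.rename (σ : Fin k → Fin k) (qV k) = qV k := by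
    rw [qV_eq, MvPolynomial.rename_C]
  have h6 : ∀ i : Fin k,
      MvPolynomial.rename (σ : Fin k → Fin k) ((MvPolynomial.X i : V k)^(r : ℕ))
        = (MvPolynomial.X (σ i) : V k)^(r : ℕ) := by
    intro i; rw [map_pow, MvPolynomial.rename_X]
  rw [PhiC_X, map_add, MvPolynomial.rename_C, map_mul, map_sub, map_one, map_sum, h5]
  simp only [h6]
  rw [Equiv.sum_comp σ (fun i => (MvPolynomial.X i : V k)^(r : ℕ))]

lemma rename_PhiC (k : ℕ) (σ : Equiv.Perm (Fin k)) (s : SF) :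
    MvPolynomial.rename (σ : Fin k → Fin k) (PhiC k s) = PhiC k s := by
  induction s using MvPolynomial.induction_on with
  | C a => rw [PhiC_C, MvPolynomial.rename_C]
  | add f g hf hg => simp only [map_add, hf, hg]
  | mul_X f r hf =>
      rw [map_mul, map_mul, hf, ← p, rename_PhiC_X, p, ← map_mul]

lemma swapVar_Phi (k i : ℕ) (F : V 0) : swapVar k i (Phi k F) = Phi k F := by
  obtain ⟨s, rfl⟩ := MvPolynomial.C_surjective (Fin 0) F
  rw [Phi_C]
  unfold swapVar
  split
  · exact rename_PhiC k _ s
  · rfl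

lemma swapVar_mul (k i : ℕ) (P Q : V k) :
    swapVar k i (P * Q) = swapVar k i P * swapVar k i Q := by
  unfold swapVar
  split
  · exact map_mul _ _ _
  · rfl

lemma Y_sub_ne (k i : ℕ) (h1 : 1 ≤ i) (h2 : i + 1 ≤ k) : Y k (i+1) - Y k i ≠ 0 := by
  have hik : i < k := by omega
  have hik' : i - 1 < k := by omega
  rw [Y, Y, dif_pos (show i + 1 - 1 < k by omega), dif_pos hik']
  intro hc
  have : (MvPolynomial.X (⟨i + 1 - 1, by omega⟩ : Fin k) : V k)
      = MvPolynomial.X ⟨i - 1, hik'⟩ := by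
    rwa [sub_eq_zero] at hc
  have := MvPolynomial.X_injective this
  have : i + 1 - 1 = i - 1 := by exact congrArg Fin.val this
  omega

lemma T_mul_symm (T : ∀ k : ℕ, ℕ → V k → V k) (hT : Trel T) (k i : ℕ)
    (h1 : 1 ≤ i) (h2 : i + 1 ≤ k) (P S : V k) (hS : swapVar k i S = S) :
    T k i (P * S) = T k i P * S := by
  apply mul_left_cancel₀ (Y_sub_ne k i h1 h2)
  have h := hT k i h1 h2 (P * S)
  have h' := hT k i h1 h2 P
  rw [swapVar_mul, hS] at h
  rw [h]
  linear_combination (-S) * h'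

lemma Tchain_mul_symm (T : ∀ k : ℕ, ℕ → V k → V k) (hT : Trel T) (m : ℕ) (S : V m)
    (hS : ∀ i, swapVar m i S = S) :
    ∀ n, n + 1 ≤ m → ∀ P : V m, Tchain T m n (P * S) = Tchain T m n P * S := by
  intro n
  induction n with
  | zero => intro _ P; rfl
  | succ n ih =>
      intro hn P
      show Tchain T m n (T m (n+1) (P * S)) = Tchain T m n (T m (n+1) P) * S
      rw [T_mul_symm T hT m (n+1) (by omega) (by omega) P S (hS (n+1))]
      exact ih (by omega) _

lemma dPlus_mul_Phi (T : ∀ k : ℕ, ℕ → V k → V k) (hT : Trel T) (k : ℕ)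
    (A : V k) (F : V 0) :
    dPlus T k (A * Phi k F) = dPlus T k A * Phi (k+1) F := by
  unfold dPlus
  rw [map_mul, raiseAdd_Phi]
  exact Tchain_mul_symm T hT (k+1) (Phi (k+1) F) (fun i => swapVar_Phi (k+1) i F)
    k (by omega) _

lemma phi_mul_Phi (T : ∀ k : ℕ, ℕ → V k → V k) (hT : Trel T) (k : ℕ)
    (A : V (k+1)) (F : V 0) :
    phi T k (A * Phi (k+1) F) = phi T k A * Phi (k+1) F := by
  unfold phi
  rw [dPlus_mul_Phi T hT (k+1) A F, dMinus_mul_Phi (k+1), dMinus_mul_Phi k A F,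
    dPlus_mul_Phi T hT k, ← sub_mul, smul_mul_assoc]

/-- Multiply the second component of a labelled state by `Φ_k F`. -/
def mulPhi (σ : Σ k : ℕ, V k) (F : V 0) : Σ k : ℕ, V k := ⟨σ.1, σ.2 * Phi σ.1 F⟩

lemma stepApply_mulPhi (T : ∀ k : ℕ, ℕ → V k → V k) (hT : Trel T)
    (s : PStep) (σ : Σ k : ℕ, V k) (F : V 0) :
    stepApply T s (mulPhi σ F) = mulPhi (stepApply T s σ) F := by
  obtain ⟨k, A⟩ := σ
  cases s with
  | east =>
      show (⟨k+1, dPlus T k (A * Phi k F)⟩ : Σ k, V k) = ⟨k+1, dPlus T k A * Phi (k+1) F⟩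
      rw [dPlus_mul_Phi T hT k A F]
  | north =>
      cases k with
      | zero =>
          show (⟨0, (0 : V 0)⟩ : Σ k, V k) = ⟨0, (0 : V 0) * Phi 0 F⟩
          rw [zero_mul]
      | succ k =>
          show (⟨k, dMinus k (A * Phi (k+1) F)⟩ : Σ k, V k) = ⟨k, dMinus k A * Phi k F⟩
          rw [dMinus_mul_Phi k A F]
  | diag =>
      cases k with
      | zero => rfl
      | succ k =>
          show (⟨k+1, phi T k (A * Phi (k+1) F)⟩ : Σ k, V k)
            = ⟨k+1, phi T k A * Phi (k+1) F⟩
          rw [phi_mul_Phi T hT k A F]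

lemma pathRun_eq_mulPhi (T : ∀ k : ℕ, ℕ → V k → V k) (hT : Trel T)
    (w : List PStep) (F : V 0) :
    pathRun T w F = mulPhi (pathRun T w 1) F := by
  induction w with
  | nil =>
      show (⟨0, F⟩ : Σ k, V k) = ⟨0, (1 : V 0) * Phi 0 F⟩
      rw [Phi_zero_eq, one_mul]
  | cons s w ih =>
      show stepApply T s (pathRun T w F) = mulPhi (stepApply T s (pathRun T w 1)) F
      rw [ih, stepApply_mulPhi T hT]

def toV0 (σ : Σ k : ℕ, V k) : V 0 :=
  if h : σ.1 = 0 then cast (congrArg V h) σ.2 else 0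

lemma dPath_eq_toV0 (T : ∀ k : ℕ, ℕ → V k → V k) (w : List PStep) (F : V 0) :
    dPath T w F = toV0 (pathRun T w F) := rfl

lemma toV0_mulPhi (σ : Σ k : ℕ, V k) (F : V 0) :
    toV0 (mulPhi σ F) = toV0 σ * F := by
  obtain ⟨k, A⟩ := σ
  cases k with
  | zero =>
      show toV0 ⟨0, A * Phi 0 F⟩ = toV0 ⟨0, A⟩ * F
      unfold toV0
      rw [dif_pos rfl, dif_pos rfl]
      simp only [cast_eq]
      rw [Phi_zero_eq]
  | succ k =>
      show toV0 ⟨k+1, A * Phi (k+1) F⟩ = toV0 ⟨k+1, A⟩ * F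
      unfold toV0
      rw [dif_neg (Nat.succ_ne_zero k), dif_neg (Nat.succ_ne_zero k), zero_mul]

lemma dPath_eq_mul (T : ∀ k : ℕ, ℕ → V k → V k) (hT : Trel T)
    (w : List PStep) (F : V 0) :
    dPath T w F = dPath T w 1 * F := by
  rw [dPath_eq_toV0, dPath_eq_toV0, pathRun_eq_mulPhi T hT w F, toV0_mulPhi]

/-- For any two paths `P, Q ∈ 𝒫` (encoded by the words `w₁, w₂`), the
path operators commute: `d_P ∘ d_Q = d_Q ∘ d_P` as operators `Λ → Λ`. -/
theorem dPath_comm (T : ∀ k : ℕ, ℕ → V k → V k) (hT : Trel T)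
    (w₁ w₂ : List PStep) (h₁ : IsPath w₁) (h₂ : IsPath w₂) :
    ∀ F : V 0, dPath T w₁ (dPath T w₂ F) = dPath T w₂ (dPath T w₁ F) := by
  intro F
  rw [dPath_eq_mul T hT w₁ (dPath T w₂ F), dPath_eq_mul T hT w₂ F,
    dPath_eq_mul T hT w₂ (dPath T w₁ F), dPath_eq_mul T hT w₁ F]
  ring

end
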